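/- (Distortion upper bound 3 on perfect binary trees.) Let T be the perfect binary tree of height h≥1, and for a vertex v let S(v)=∑_{u∈V} d(u,v). Then for every leaf ℓ of T, S(ℓ) ≤ 3·S(root). Combined with the fact that the root minimizes S and leaves maximize S over all vertices, this implies that the distortion of any voting rule (and thus of IRV) on unweighted perfect binary trees, with voters at all vertices and candidates at a subset of vertices, is at most 3. -/

import Mathlib

/-- Tree distance between two vertices of the infinite binary tree, where vertices are
identified with their 1-based heap indices (the root is `1`, the children of `j` are
`2j` and `2j+1`): repeatedly climb from the larger index to its parent. -/
def td (a b : ℕ) : ℕ :=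
  if a = b then 0
  else if b < a then td (a / 2) b + 1
  else td a (b / 2) + 1
termination_by a + b
decreasing_by
  · omega
  · omega

lemma td_self (a : ℕ) : td a a = 0 := by rw [td]; simp

lemma td_gt (a b : ℕ) (h : b < a) : td a b = td (a / 2) b + 1 := by
  rw [td]; rw [if_neg (by omega), if_pos h]

lemma td_lt (a b : ℕ) (h : a < b) : td a b = td a (b / 2) + 1 := by
  rw [td]; rw [if_neg (by omega), if_neg (by omega)]

lemma td_to_one : ∀ d u, 2 ^ d ≤ u → u < 2 ^ (d + 1) → td u 1 = d := by
  intro d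
  induction d with
  | zero => intro u h1 h2; interval_cases u; exact td_self 1
  | succ d ih =>
    intro u h1 h2
    have e1 : (2:ℕ) ^ (d+1) = 2 * 2 ^ d := by ring
    have e2 : (2:ℕ) ^ (d+2) = 4 * 2 ^ d := by ring
    have hp : (1:ℕ) ≤ 2 ^ d := Nat.one_le_two_pow
    rw [td_gt u 1 (by omega), ih (u/2) (by omega) (by omega)]

def insub (v u : ℕ) : Prop := ∃ k, u / 2 ^ k = v

lemma insub_self (v : ℕ) : insub v v := ⟨0, by simp⟩

lemma insub_ge (v u : ℕ) (h : insub v u) : v ≤ u := by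
  obtain ⟨k, hk⟩ := h
  have := Nat.div_le_self u (2 ^ k)
  omega

lemma insub_ne (v u : ℕ) (h : insub v u) (hne : u ≠ v) :
    2 * v ≤ u ∧ insub v (u / 2) := by
  obtain ⟨k, hk⟩ := h
  match k with
  | 0 => simp at hk; omega
  | k + 1 =>
    have he : u / 2 ^ (k+1) = u / 2 / 2 ^ k := by
      rw [Nat.div_div_eq_div_mul]; ring_nf
    refine ⟨?_, ⟨k, by rw [← he, hk]⟩⟩
    have h1 : v * 2 ^ (k+1) ≤ u := by
      rw [← hk]
      exact Nat.div_mul_le_self u _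
    have h2 : (2:ℕ) ≤ 2 ^ (k+1) := by
      have : (2:ℕ)^1 ≤ 2^(k+1) := Nat.pow_le_pow_right (by norm_num) (by omega)
      simpa using this
    nlinarith
lemma not_insub_half (v u : ℕ) (h : ¬ insub v u) : ¬ insub v (u / 2) := by
  intro ⟨k, hk⟩
  exact h ⟨k + 1, by rw [← hk, Nat.div_div_eq_div_mul]; ring_nf⟩

lemma td_step (v : ℕ) (hv : 2 ≤ v) : ∀ u, 1 ≤ u →
    (insub v u → td u (v / 2) = td u v + 1) ∧
    (¬ insub v u → td u v = td u (v / 2) + 1) := by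
  intro u
  induction u using Nat.strong_induction_on with
  | _ u IH =>
    intro hu
    constructor
    · intro hin
      by_cases heq : u = v
      · subst heq
        have h2 : u / 2 < u := by omega
        rw [td_self, td_gt u (u/2) h2, td_self]
      · obtain ⟨h2v, hin2⟩ := insub_ne v u hin heq
        have IH2 := (IH (u/2) (by omega) (by omega)).1 hin2
        rw [td_gt u v (by omega), td_gt u (v/2) (by omega), IH2]
    · intro hnin
      have hne : u ≠ v := fun e => hnin (e ▸ insub_self v)
      rcases lt_or_gt_of_ne hne with hlt | hgt
      · exact td_lt u v hlt
      · have hnin2 := not_insub_half v u hnin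
        have hne2 : u / 2 ≠ v := by
          intro e; exact hnin ⟨1, by simpa using e⟩
        have IH2 := (IH (u/2) (by omega) (by omega)).2 hnin2
        rw [td_gt u v (by omega), td_gt u (v/2) (by omega), IH2]

def subF (v m : ℕ) : Finset ℕ :=
  (Finset.range (m + 1)).biUnion fun t => Finset.Ico (v * 2 ^ t) ((v + 1) * 2 ^ t)

lemma mem_subF (v m u : ℕ) :
    u ∈ subF v m ↔ ∃ t, t ≤ m ∧ v * 2 ^ t ≤ u ∧ u < (v + 1) * 2 ^ t := by
  simp [subF, Finset.mem_biUnion, Finset.mem_Ico, Nat.lt_succ_iff]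

lemma geomsum : ∀ m : ℕ, ∑ t ∈ Finset.range (m + 1), 2 ^ t = 2 ^ (m + 1) - 1 := by
  intro m
  induction m with
  | zero => simp
  | succ m ih =>
    rw [Finset.sum_range_succ, ih]
    have : (1:ℕ) ≤ 2 ^ (m+1) := Nat.one_le_two_pow
    have e : (2:ℕ)^(m+2) = 2 * 2^(m+1) := by ring
    omega

lemma subF_disj (v : ℕ) (hv : 1 ≤ v) (a b : ℕ) (hlt : a < b) :
    Disjoint (Finset.Ico (v * 2 ^ a) ((v + 1) * 2 ^ a)) (Finset.Ico (v * 2 ^ b) ((v + 1) * 2 ^ b)) := by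
  apply Finset.disjoint_left.mpr
  intro x hx hx'
  simp only [Finset.mem_Ico] at hx hx'
  have h1 : (v + 1) * 2 ^ a ≤ v * 2 ^ b := by
    have h2 : (2:ℕ) ^ (a+1) ≤ 2 ^ b := Nat.pow_le_pow_right (by norm_num) (by omega)
    have e : (2:ℕ) ^ (a+1) = 2 * 2 ^ a := by ring
    nlinarith
  omega

lemma card_subF (v m : ℕ) (hv : 1 ≤ v) : (subF v m).card = 2 ^ (m + 1) - 1 := by
  rw [subF, Finset.card_biUnion]
  · have hc : ∀ t ∈ Finset.range (m+1), (Finset.Ico (v * 2 ^ t) ((v + 1) * 2 ^ t)).card = 2 ^ t := by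
      intro t _
      rw [Nat.card_Ico, Nat.add_mul, one_mul, Nat.add_sub_cancel_left]
    rw [Finset.sum_congr rfl hc, geomsum]
  · intro a _ b _ hab
    rcases lt_or_gt_of_ne hab with hlt | hlt
    · exact subF_disj v hv a b hlt
    · exact (subF_disj v hv b a hlt).symm

lemma insub_iff_mem (h d v u : ℕ) (hd : d ≤ h) (hv1 : 2 ^ d ≤ v) (hv2 : v < 2 ^ (d + 1))
    (hu1 : 1 ≤ u) (hu2 : u ≤ 2 ^ (h + 1) - 1) :
    insub v u ↔ u ∈ subF v (h - d) := by
  rw [mem_subF]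
  constructor
  · rintro ⟨t, ht⟩
    have hpos : (0:ℕ) < 2 ^ t := Nat.pow_pos (by norm_num)
    have h1 : v * 2 ^ t ≤ u := by
      rw [← ht]; exact Nat.div_mul_le_self u _
    have h2 : u < (v + 1) * 2 ^ t := by
      have : u / 2 ^ t < v + 1 := by omega
      exact Nat.lt_mul_of_div_lt this hpos
    refine ⟨t, ?_, h1, h2⟩
    by_contra hc
    push_neg at hc
    have : 2 ^ (d + t) ≤ u := by
      calc 2 ^ (d + t) = 2 ^ d * 2 ^ t := by ring
      _ ≤ v * 2 ^ t := by exact Nat.mul_le_mul_right _ hv1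
      _ ≤ u := h1
    have h3 : 2 ^ (h + 1) ≤ 2 ^ (d + t) := Nat.pow_le_pow_right (by norm_num) (by omega)
    have h4 : (1:ℕ) ≤ 2 ^ (h+1) := Nat.one_le_two_pow
    omega
  · rintro ⟨t, _, h1, h2⟩
    exact ⟨t, Nat.div_eq_of_lt_le h1 h2⟩

def Ssum (h v : ℕ) : ℕ := ∑ u ∈ Finset.Icc 1 (2 ^ (h + 1) - 1), td u v

lemma subF_subset (h d v : ℕ) (hd : d ≤ h) (hv1 : 2 ^ d ≤ v) (hv2 : v < 2 ^ (d + 1)) :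
    subF v (h - d) ⊆ Finset.Icc 1 (2 ^ (h + 1) - 1) := by
  intro u hu
  rw [mem_subF] at hu
  obtain ⟨t, ht, h1, h2⟩ := hu
  rw [Finset.mem_Icc]
  have hp : (1:ℕ) ≤ 2 ^ t := Nat.one_le_two_pow
  constructor
  · have hv0 : 1 ≤ v := le_trans Nat.one_le_two_pow hv1
    have : 1 * 1 ≤ v * 2 ^ t := Nat.mul_le_mul hv0 hp
    omega
  · have e1 : (v + 1) * 2 ^ t ≤ 2 ^ (d + 1) * 2 ^ t := by
      apply Nat.mul_le_mul_right; omega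
    have e2 : (2:ℕ) ^ (d + 1) * 2 ^ t = 2 ^ (d + 1 + t) := by rw [← pow_add]
    have e3 : (2:ℕ) ^ (d + 1 + t) ≤ 2 ^ (h + 1) := Nat.pow_le_pow_right (by norm_num) (by omega)
    omega

lemma Ssum_step (h d v : ℕ) (hd1 : 1 ≤ d) (hdh : d ≤ h) (hv1 : 2 ^ d ≤ v) (hv2 : v < 2 ^ (d + 1)) :
    Ssum h v + 2 * 2 ^ (h - d + 1) = Ssum h (v / 2) + 2 ^ (h + 1) + 1 := by
  have hv : 2 ≤ v := le_trans (by exact Nat.pow_le_pow_right (by norm_num) hd1 : (2:ℕ)^1 ≤ 2^d) hv1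
  set T := Finset.Icc 1 (2 ^ (h + 1) - 1) with hT
  set S := subF v (h - d) with hS
  have hsub : S ⊆ T := subF_subset h d v hdh hv1 hv2
  have hcardT : T.card = 2 ^ (h + 1) - 1 := by rw [hT, Nat.card_Icc]; omega
  have hcardS : S.card = 2 ^ (h - d + 1) - 1 := card_subF v (h - d) (by omega)
  -- per element facts
  have hin : ∀ u ∈ S, td u (v / 2) = td u v + 1 := by
    intro u hu
    have hu1 : 1 ≤ u ∧ u ≤ 2 ^ (h+1) - 1 := by
      have := hsub hu; rw [hT, Finset.mem_Icc] at this; exact this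
    exact (td_step v hv u hu1.1).1
      ((insub_iff_mem h d v u hdh hv1 hv2 hu1.1 hu1.2).2 hu)
  have hout : ∀ u ∈ T \ S, td u v = td u (v / 2) + 1 := by
    intro u hu
    rw [Finset.mem_sdiff, hT, Finset.mem_Icc] at hu
    obtain ⟨⟨hu1, hu2⟩, hns⟩ := hu
    exact (td_step v hv u hu1).2
      (fun hin => hns ((insub_iff_mem h d v u hdh hv1 hv2 hu1 hu2).1 hin))
  -- sums
  have e1 : ∑ u ∈ T, td u (v / 2) = ∑ u ∈ T \ S, td u (v / 2) + ∑ u ∈ S, td u (v / 2) :=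
    (Finset.sum_sdiff hsub).symm
  have e2 : ∑ u ∈ T, td u v = ∑ u ∈ T \ S, td u v + ∑ u ∈ S, td u v :=
    (Finset.sum_sdiff hsub).symm
  have e3 : ∑ u ∈ S, td u (v / 2) = ∑ u ∈ S, td u v + S.card := by
    rw [Finset.sum_congr rfl hin, Finset.sum_add_distrib, Finset.sum_const, smul_eq_mul, mul_one]
  have e4 : ∑ u ∈ T \ S, td u v = ∑ u ∈ T \ S, td u (v / 2) + (T \ S).card := by
    rw [Finset.sum_congr rfl hout, Finset.sum_add_distrib, Finset.sum_const, smul_eq_mul, mul_one]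
  have e5 : (T \ S).card = T.card - S.card := Finset.card_sdiff_of_subset hsub
  have e6 : S.card ≤ T.card := Finset.card_le_card hsub
  have hSs : Ssum h v = ∑ u ∈ T, td u v := rfl
  have hSs2 : Ssum h (v / 2) = ∑ u ∈ T, td u (v / 2) := rfl
  have hpow1 : 2 * 2 ^ (h - d + 1) ≤ 2 ^ (h + 1) := by
    have : (2:ℕ) ^ (h - d + 2) ≤ 2 ^ (h + 1) := Nat.pow_le_pow_right (by norm_num) (by omega)
    have e : (2:ℕ) ^ (h - d + 2) = 2 * 2 ^ (h - d + 1) := by ring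
    omega
  have hpow2 : (1:ℕ) ≤ 2 ^ (h - d + 1) := Nat.one_le_two_pow
  omega

lemma Ssum_root (h : ℕ) : Ssum h 1 + 2 ^ (h + 1) = h * 2 ^ (h + 1) + 2 := by
  induction h with
  | zero =>
    have : Ssum 0 1 = 0 := by
      show ∑ u ∈ Finset.Icc 1 (2 ^ 1 - 1), td u 1 = 0
      norm_num
      rw [td]; simp
    omega
  | succ h ih =>
    have hp : (1:ℕ) ≤ 2 ^ (h + 1) := Nat.one_le_two_pow
    have hp2 : (2:ℕ) ^ (h + 2) = 2 * 2 ^ (h + 1) := by ring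
    have hicc : ∀ n : ℕ, 1 ≤ n → Finset.Icc 1 n = Finset.Ico 1 (n + 1) := by
      intro n _; rw [Finset.Ico_add_one_right_eq_Icc]
    have split : Ssum (h + 1) 1 = Ssum h 1 + ∑ u ∈ Finset.Ico (2 ^ (h + 1)) (2 ^ (h + 2)), td u 1 := by
      show ∑ u ∈ Finset.Icc 1 (2 ^ (h + 2) - 1), td u 1
        = ∑ u ∈ Finset.Icc 1 (2 ^ (h + 1) - 1), td u 1 + _
      rw [hicc _ (by omega), hicc _ (by omega)]
      have e1 : 2 ^ (h + 2) - 1 + 1 = 2 ^ (h + 2) := by omega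
      have e2 : 2 ^ (h + 1) - 1 + 1 = 2 ^ (h + 1) := by omega
      rw [e1, e2]
      exact (Finset.sum_Ico_consecutive _ (by omega) (by omega)).symm
    have const : ∑ u ∈ Finset.Ico (2 ^ (h + 1)) (2 ^ (h + 2)), td u 1
        = (h + 1) * 2 ^ (h + 1) := by
      have : ∀ u ∈ Finset.Ico (2 ^ (h + 1)) (2 ^ (h + 2)), td u 1 = h + 1 := by
        intro u hu
        rw [Finset.mem_Ico] at hu
        exact td_to_one (h + 1) u hu.1 hu.2
      rw [Finset.sum_congr rfl this, Finset.sum_const, Nat.card_Ico, smul_eq_mul]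
      have ecard : 2 ^ (h + 2) - 2 ^ (h + 1) = 2 ^ (h + 1) := by omega
      rw [ecard, Nat.mul_comm]
    rw [split, const]
    have expand : (h + 1) * 2 ^ (h + 1 + 1) = 2 * (h * 2 ^ (h + 1)) + 2 * 2 ^ (h + 1) := by ring
    have expand2 : (h + 1) * 2 ^ (h + 1) = h * 2 ^ (h + 1) + 2 ^ (h + 1) := by ring
    have e3 : (2:ℕ) ^ (h + 1 + 1) = 2 * 2 ^ (h + 1) := by ring
    omega

lemma depth_spec (v : ℕ) (hv : 1 ≤ v) :
    2 ^ (Nat.log 2 v) ≤ v ∧ v < 2 ^ (Nat.log 2 v + 1) := by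
  exact ⟨Nat.pow_log_le_self 2 (by omega), Nat.lt_pow_succ_log_self (by norm_num) v⟩

lemma depth_le (h v : ℕ) (hv : 1 ≤ v) (hv2 : v ≤ 2 ^ (h + 1) - 1) : Nat.log 2 v ≤ h := by
  have h1 := (depth_spec v hv).1
  by_contra hc
  have : (2:ℕ) ^ (h + 1) ≤ 2 ^ (Nat.log 2 v) := Nat.pow_le_pow_right (by norm_num) (by omega)
  omega

lemma depth_ge_one (v : ℕ) (hv : 2 ≤ v) : 1 ≤ Nat.log 2 v := by
  exact Nat.le_log_of_pow_le (by norm_num) (by rw [pow_one]; exact hv)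

lemma root_min (h : ℕ) : ∀ v, 1 ≤ v → v ≤ 2 ^ (h + 1) - 1 → Ssum h 1 ≤ Ssum h v := by
  intro v
  induction v using Nat.strong_induction_on with
  | _ v IH =>
    intro hv1 hv2
    rcases eq_or_lt_of_le hv1 with heq | hgt
    · rw [← heq]
    · have hv : 2 ≤ v := hgt
      set d := Nat.log 2 v with hd
      obtain ⟨hd1, hd2⟩ := depth_spec v (by omega)
      have hdge : 1 ≤ d := depth_ge_one v hv
      have hdle : d ≤ h := depth_le h v (by omega) hv2
      have step := Ssum_step h d v hdge hdle hd1 hd2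
      have prev : Ssum h 1 ≤ Ssum h (v / 2) := IH (v / 2) (by omega) (by omega) (by omega)
      have hpow1 : 2 * 2 ^ (h - d + 1) ≤ 2 ^ (h + 1) := by
        have : (2:ℕ) ^ (h - d + 2) ≤ 2 ^ (h + 1) := Nat.pow_le_pow_right (by norm_num) (by omega)
        have e : (2:ℕ) ^ (h - d + 2) = 2 * 2 ^ (h - d + 1) := by ring
        omega
      omega

lemma upper (h : ℕ) : ∀ d v, 2 ^ d ≤ v → v < 2 ^ (d + 1) → d ≤ h →
    Ssum h v + 2 ^ (h + 2) ≤ Ssum h 1 + d * (2 ^ (h + 1) + 1) + 2 ^ (h + 2 - d) := by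
  intro d
  induction d with
  | zero =>
    intro v h1 h2 _
    have : v = 1 := by norm_num at h1 h2; omega
    subst this
    simp
  | succ d ih =>
    intro v h1 h2 hdh
    have hE : h - (d + 1) + 1 = h - d := by omega
    have step := Ssum_step h (d + 1) v (by omega) hdh h1 h2
    rw [hE] at step
    have hv2 : v / 2 < 2 ^ (d + 1) := by
      have e : (2:ℕ) ^ (d + 1 + 1) = 2 * 2 ^ (d + 1) := by ring
      omega
    have hv1 : 2 ^ d ≤ v / 2 := by
      have e : (2:ℕ) ^ (d + 1) = 2 * 2 ^ d := by ring
      omega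
    have IH2 := ih (v / 2) hv1 hv2 (by omega)
    have e1 : (2:ℕ) ^ (h + 2 - d) = 2 * 2 ^ (h + 2 - (d + 1)) := by
      have : h + 2 - d = (h + 2 - (d + 1)) + 1 := by omega
      rw [this]; ring
    have e2 : (2:ℕ) ^ (h + 2 - (d + 1)) = 2 * 2 ^ (h - d) := by
      have : h + 2 - (d + 1) = (h - d) + 1 := by omega
      rw [this]; ring
    have expand : (d + 1) * (2 ^ (h + 1) + 1) = d * (2 ^ (h + 1) + 1) + (2 ^ (h + 1) + 1) := by
      ring
    omega

lemma main_bound (h : ℕ) (hh : 1 ≤ h) (v : ℕ) (hv1 : 1 ≤ v) (hv2 : v ≤ 2 ^ (h + 1) - 1) :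
    Ssum h v ≤ 3 * Ssum h 1 := by
  rcases eq_or_lt_of_le hv1 with heq | hgt
  · rw [← heq]; omega
  · have hv : 2 ≤ v := hgt
    set d := Nat.log 2 v with hd
    obtain ⟨hd1, hd2⟩ := depth_spec v (by omega)
    have hdge : 1 ≤ d := depth_ge_one v hv
    have hdle : d ≤ h := depth_le h v (by omega) hv2
    have hup := upper h d v hd1 hd2 hdle
    have hroot := Ssum_root h
    have fD : d * (2 ^ (h + 1) + 1) ≤ h * (2 ^ (h + 1) + 1) :=
      Nat.mul_le_mul_right _ hdle
    have fN : h * (2 ^ (h + 1) + 1) = h * 2 ^ (h + 1) + h := by ring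
    have fC : (2:ℕ) ^ (h + 2 - d) ≤ 2 ^ (h + 1) :=
      Nat.pow_le_pow_right (by norm_num) (by omega)
    have fpow : (2:ℕ) ^ (h + 2) = 2 * 2 ^ (h + 1) := by ring
    rcases eq_or_lt_of_le hh with h1 | h2
    · -- h = 1
      rw [← h1] at hup hroot hdle ⊢
      interval_cases d
      norm_num at hup hroot ⊢
      omega
    · -- h ≥ 2
      have fB : h < 2 ^ h := Nat.lt_two_pow_self
      have fA : (2:ℕ) ^ (h + 1) = 2 * 2 ^ h := by ring
      have fM : 2 * 2 ^ (h + 1) ≤ h * 2 ^ (h + 1) :=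
        Nat.mul_le_mul_right _ (by omega)
      omega


/-- The vertices of the perfect binary tree of height `h` are the heap indices
`1, …, 2^(h+1) − 1`, encoded as `Fin (2^(h+1) − 1)` (index `i` is vertex `i + 1`);
`i` is a leaf iff `2^h ≤ i + 1`.  `pbtSC h v` is the sum of tree distances from all
vertices to `v`. -/
def pbtSC (h : ℕ) (v : Fin (2 ^ (h + 1) - 1)) : ℕ :=
  ∑ u : Fin (2 ^ (h + 1) - 1), td ((u : ℕ) + 1) ((v : ℕ) + 1)

/-- The root of the perfect binary tree of height `h` (heap index `1`). -/
def pbtRoot (h : ℕ) : Fin (2 ^ (h + 1) - 1) :=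
  ⟨0, by
    have h2 : (2 : ℕ) ^ 1 ≤ 2 ^ (h + 1) := Nat.pow_le_pow_right (by norm_num) (by omega)
    norm_num at h2
    omega⟩

lemma pbtSC_eq (h : ℕ) (v : Fin (2 ^ (h + 1) - 1)) : pbtSC h v = Ssum h ((v : ℕ) + 1) := by
  rw [pbtSC, Ssum, Fin.sum_univ_eq_sum_range (fun u => td (u + 1) ((v : ℕ) + 1))]
  have h1 : (1:ℕ) ≤ 2 ^ (h + 1) := Nat.one_le_two_pow
  rw [← Finset.Ico_add_one_right_eq_Icc, Finset.sum_Ico_eq_sum_range]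
  apply Finset.sum_congr
  · congr 1
  · intro x _
    rw [Nat.add_comm 1 x]

theorem pbt_distortion_at_most_three (h : ℕ) (hh : 1 ≤ h) :
    (∀ ℓ : Fin (2 ^ (h + 1) - 1), 2 ^ h ≤ (ℓ : ℕ) + 1 →
      pbtSC h ℓ ≤ 3 * pbtSC h (pbtRoot h)) ∧
    (∀ v w : Fin (2 ^ (h + 1) - 1), pbtSC h w ≤ 3 * pbtSC h v) := by
  have hroot : pbtSC h (pbtRoot h) = Ssum h 1 := by
    rw [pbtSC_eq]
    rfl
  have bound : ∀ v : Fin (2 ^ (h + 1) - 1), pbtSC h v ≤ 3 * Ssum h 1 := by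
    intro v
    rw [pbtSC_eq]
    exact main_bound h hh ((v : ℕ) + 1) (by omega) (by have := v.isLt; omega)
  have lower : ∀ v : Fin (2 ^ (h + 1) - 1), Ssum h 1 ≤ pbtSC h v := by
    intro v
    rw [pbtSC_eq]
    exact root_min h ((v : ℕ) + 1) (by omega) (by have := v.isLt; omega)
  constructor
  · intro ℓ _
    rw [hroot]
    exact bound ℓ
  · intro v w
    calc pbtSC h w ≤ 3 * Ssum h 1 := bound w
      _ ≤ 3 * pbtSC h v := Nat.mul_le_mul_left 3 (lower v)
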